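/- arXiv:1211.6505 — 3 statements merged into one kernel-verified Lean document; each statement's English description precedes it below -/
import Mathlib

section
/- Let n ≥ 1, let Φ be a Schwartz function on ℝⁿ, let T > 0 and set q = n/T. Then there is a constant C = C(n) such that for every tempered distribution f on ℝⁿ and every x ∈ ℝⁿ, M_{Φ,T}f(x)^q ≤ C · M((M_{Φ,1}f)^q)(x), where both sides are interpreted as values in [0,∞]. -/
open MeasureTheory Metric Filter Topology ENNReal SchwartzMap
open scoped NNReal

noncomputable section

namespace VarHardy

variable {n : ℕ}

/-- `n`-dimensional Euclidean space. -/
abbrev Euc (n : ℕ) := EuclideanSpace ℝ (Fin n)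

/-- The closed axis-parallel cube centered at `c` with half side length `r`. -/
def cube (c : Euc n) (r : ℝ) : Set (Euc n) := {y | ∀ i, |y i - c i| ≤ r}

/-- The Hardy–Littlewood maximal operator of an `ℝ≥0∞`-valued function: the supremum of
the averages over all axis-parallel cubes containing the point. -/
def maximalFn (f : Euc n → ℝ≥0∞) (x : Euc n) : ℝ≥0∞ :=
  ⨆ (c : Euc n) (r : ℝ) (_ : 0 < r) (_ : x ∈ cube c r),
    (volume (cube c r))⁻¹ * ∫⁻ y in cube c r, f y

/-- The Hardy–Littlewood maximal operator of a real-valued function. -/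
def maximalOp (f : Euc n → ℝ) (x : Euc n) : ℝ≥0∞ :=
  maximalFn (fun y => (‖f y‖₊ : ℝ≥0∞)) x

/-- The Luxemburg quasi-norm `‖f‖_{p(·)}` of an `ℝ≥0∞`-valued function `f`. -/
def luxNorm (p : Euc n → ℝ) (f : Euc n → ℝ≥0∞) : ℝ≥0∞ :=
  sInf {l : ℝ≥0∞ | ∫⁻ x, (f x / l) ^ p x ∂volume ≤ 1}

/-- The Luxemburg quasi-norm of a real-valued function. -/
def luxNorm' (p : Euc n → ℝ) (f : Euc n → ℝ) : ℝ≥0∞ :=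
  luxNorm p (fun x => (‖f x‖₊ : ℝ≥0∞))

/-- `p(·) ∈ M𝒫₀` with exponent `p₀`:  `0 < p₀ < p₋`, `p₊ < ∞`, and the Hardy–Littlewood
maximal operator is bounded on `L^{p(·)/p₀}`. -/
structure IsMP0 (p : Euc n → ℝ) (p₀ : ℝ) : Prop where
  meas : Measurable p
  p₀_pos : 0 < p₀
  p₀_lt_essInf : ∃ m : ℝ, p₀ < m ∧ ∀ᵐ x ∂(volume : Measure (Euc n)), m ≤ p x
  essSup_lt_top : ∃ M : ℝ, ∀ᵐ x ∂(volume : Measure (Euc n)), p x ≤ M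
  maximal_bound : ∃ C : ℝ≥0∞, C < ∞ ∧ ∀ f : Euc n → ℝ≥0∞, Measurable f →
    luxNorm (fun x => p x / p₀) (maximalFn f) ≤ C * luxNorm (fun x => p x / p₀) f

section Schwartz

lemma hasTemperateGrowth_affine (A : Euc n →L[ℝ] Euc n) (b : Euc n) :
    Function.HasTemperateGrowth (fun y : Euc n => A y + b) := by
  apply Function.HasTemperateGrowth.of_fderiv (k := 1) (C := ‖A‖ + ‖b‖)
  · have h : (fderiv ℝ fun y : Euc n => A y + b) = fun _ => A := by
      funext y
      rw [fderiv_add_const]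
      exact A.fderiv
    rw [h]
    exact .const _
  · exact A.differentiable.add_const _
  · intro z
    have h1 : ‖A z + b‖ ≤ ‖A‖ * ‖z‖ + ‖b‖ :=
      (norm_add_le _ _).trans (by gcongr; exact A.le_opNorm z)
    have h2 : ‖A‖ * ‖z‖ + ‖b‖ ≤ (‖A‖ + ‖b‖) * (1 + ‖z‖) ^ 1 := by
      have hz := norm_nonneg z
      have hA := A.opNorm_nonneg
      have hb := norm_nonneg b
      nlinarith
    exact h1.trans h2

lemma hasTemperateGrowth_dilateShift (t : ℝ) (x : Euc n) :
    Function.HasTemperateGrowth (fun y : Euc n => t⁻¹ • (x - y)) := by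
  have h : (fun y : Euc n => t⁻¹ • (x - y)) =
      fun y : Euc n => (-(t⁻¹ • ContinuousLinearMap.id ℝ (Euc n))) y + t⁻¹ • x := by
    funext y
    simp [ContinuousLinearMap.neg_apply, ContinuousLinearMap.smul_apply,
      ContinuousLinearMap.id_apply, smul_sub, sub_eq_neg_add]
  rw [h]
  exact hasTemperateGrowth_affine _ _

lemma antilipschitz_dilateShift (t : ℝ) (ht : 0 < t) (x : Euc n) :
    AntilipschitzWith (⟨t, ht.le⟩ : ℝ≥0) (fun y : Euc n => t⁻¹ • (x - y)) := by
  apply AntilipschitzWith.of_le_mul_dist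
  intro y z
  have h : dist (t⁻¹ • (x - y)) (t⁻¹ • (x - z)) = t⁻¹ * dist y z := by
    rw [dist_smul₀, Real.norm_eq_abs, dist_sub_left, abs_of_pos (inv_pos.2 ht)]
  rw [h]
  change dist y z ≤ t * (t⁻¹ * dist y z)
  rw [← mul_assoc, mul_inv_cancel₀ ht.ne', one_mul]

/-- The Schwartz function `y ↦ t^{-n} Φ((x - y)/t) = Φ_t(x - y)`. -/
def dilateShift (Φ : 𝓢(Euc n, ℝ)) (t : ℝ) (ht : 0 < t) (x : Euc n) : 𝓢(Euc n, ℝ) :=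
  (t ^ n)⁻¹ • SchwartzMap.compCLMOfAntilipschitz ℝ (hasTemperateGrowth_dilateShift t x)
    (antilipschitz_dilateShift t ht x) Φ

@[simp] lemma dilateShift_apply (Φ : 𝓢(Euc n, ℝ)) (t : ℝ) (ht : 0 < t) (x y : Euc n) :
    dilateShift Φ t ht x y = (t ^ n)⁻¹ * Φ (t⁻¹ • (x - y)) := rfl

/-- Tempered distributions on `ℝⁿ`. -/
abbrev Distribution (n : ℕ) := 𝓢(Euc n, ℝ) →L[ℝ] ℝ

/-- The convolution `(f ∗ Φ_t)(x)` of a tempered distribution `f` with `Φ_t`. -/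
def distConv (f : Distribution n) (Φ : 𝓢(Euc n, ℝ)) (t : ℝ) (ht : 0 < t) (x : Euc n) : ℝ :=
  f (dilateShift Φ t ht x)

/-- The radial maximal function `M_{Φ,0} f`. -/
def radialMax (f : Distribution n) (Φ : 𝓢(Euc n, ℝ)) (x : Euc n) : ℝ≥0∞ :=
  ⨆ (t : ℝ) (ht : 0 < t), (‖distConv f Φ t ht x‖₊ : ℝ≥0∞)

/-- The partial derivative (as an operator on Schwartz functions) in the direction of the
`i`-th standard basis vector. -/
def basisPDeriv (i : Fin n) : 𝓢(Euc n, ℝ) →L[ℝ] 𝓢(Euc n, ℝ) :=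
  LineDeriv.lineDerivOpCLM ℝ 𝓢(Euc n, ℝ) (EuclideanSpace.single i (1 : ℝ))

/-- The multi-index partial derivative `D^β` of a Schwartz function. -/
def mDeriv (β : Fin n → ℕ) (Φ : 𝓢(Euc n, ℝ)) : 𝓢(Euc n, ℝ) :=
  (List.finRange n).foldr (fun i Ψ => (fun Ψ' => basisPDeriv i Ψ')^[β i] Ψ) Φ

/-- The collection `𝓢_N` of Schwartz functions all of whose seminorms
`‖Φ‖_{α,β} = sup_x |x^α D^β Φ(x)|` with `|α|, |β| ≤ N` are at most 1. -/
def schwartzSetN (N : ℕ) : Set 𝓢(Euc n, ℝ) :=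
  {Φ | ∀ α β : Fin n → ℕ, (∑ i, α i) ≤ N → (∑ i, β i) ≤ N →
    ∀ x : Euc n, |(∏ i, x i ^ α i) * mDeriv β Φ x| ≤ 1}

/-- The grand maximal function `𝓜_N f`. -/
def grandMax (N : ℕ) (f : Distribution n) (x : Euc n) : ℝ≥0∞ :=
  ⨆ (Φ : 𝓢(Euc n, ℝ)) (_ : Φ ∈ schwartzSetN N) (t : ℝ) (ht : 0 < t),
    (‖distConv f Φ t ht x‖₊ : ℝ≥0∞)

/-- The `H^{p(·)}` quasi-norm `‖𝓜_N f‖_{p(·)}`. -/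
def hardyNorm (p : Euc n → ℝ) (N : ℕ) (f : Distribution n) : ℝ≥0∞ :=
  luxNorm p (grandMax N f)

/-- The distribution `F` is represented by the locally integrable function `g`. -/
def Represents (F : Distribution n) (g : Euc n → ℝ) : Prop :=
  ∀ φ : 𝓢(Euc n, ℝ), F φ = ∫ x, g x * φ x

/-- The convolution `(g ∗ Φ_t)(x)` of a function `g` with `Φ_t`. -/
def funConv (g : Euc n → ℝ) (Φ : 𝓢(Euc n, ℝ)) (t : ℝ) (x : Euc n) : ℝ :=
  ∫ y : Euc n, g y * ((t ^ n)⁻¹ * Φ (t⁻¹ • (x - y)))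

/-- The radial maximal function `M_{Φ,0} g` of a function `g`. -/
def funRadialMax (g : Euc n → ℝ) (Φ : 𝓢(Euc n, ℝ)) (x : Euc n) : ℝ≥0∞ :=
  ⨆ (t : ℝ) (_ : 0 < t), (‖funConv g Φ t x‖₊ : ℝ≥0∞)

end Schwartz

section Atoms

/-- The (ℝ≥0∞-valued) characteristic function of the closed ball `B(x₀, r)`. -/
def ballInd (x₀ : Euc n) (r : ℝ) : Euc n → ℝ≥0∞ := (closedBall x₀ r).indicator 1

/-- `‖χ_B‖_{p(·)}` for the ball `B = B(x₀,r)`. -/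
def ballNorm (p : Euc n → ℝ) (x₀ : Euc n) (r : ℝ) : ℝ≥0∞ := luxNorm p (ballInd x₀ r)

/-- A `(p(·), ∞)` atom supported on the ball `B(x₀, r)`. -/
structure IsAtomInf (p : Euc n → ℝ) (p₀ : ℝ) (a : Euc n → ℝ) (x₀ : Euc n) (r : ℝ) : Prop where
  meas : Measurable a
  r_pos : 0 < r
  supp : ∀ x ∉ closedBall x₀ r, a x = 0
  size : ∀ᵐ x ∂(volume : Measure (Euc n)), (‖a x‖₊ : ℝ≥0∞) ≤ (ballNorm p x₀ r)⁻¹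
  moments : ∀ α : Fin n → ℕ, ((∑ i, α i : ℕ) : ℤ) ≤ ⌊(n : ℝ) * (1 / p₀ - 1)⌋ →
    ∫ x : Euc n, a x * ∏ i, (x i) ^ α i = 0

/-- A `(p(·), q)` atom supported on the ball `B(x₀, r)`. -/
structure IsAtomQ (p : Euc n → ℝ) (p₀ q : ℝ) (a : Euc n → ℝ) (x₀ : Euc n) (r : ℝ) : Prop where
  meas : Measurable a
  r_pos : 0 < r
  supp : ∀ x ∉ closedBall x₀ r, a x = 0
  size : (∫⁻ x, (‖a x‖₊ : ℝ≥0∞) ^ q) ^ (1 / q) ≤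
    (volume (closedBall x₀ r)) ^ (1 / q) * (ballNorm p x₀ r)⁻¹
  moments : ∀ α : Fin n → ℕ, ((∑ i, α i : ℕ) : ℤ) ≤ ⌊(n : ℝ) * (1 / p₀ - 1)⌋ →
    ∫ x : Euc n, a x * ∏ i, (x i) ^ α i = 0

/-- The function `Σ_j λ_j χ_{B_j} / ‖χ_{B_j}‖_{p(·)}` associated to an atomic decomposition. -/
def atomSumFn (p : Euc n → ℝ) (lam : ℕ → ℝ) (x₀ : ℕ → Euc n) (r : ℕ → ℝ) : Euc n → ℝ≥0∞ :=
  fun x => ∑' j, ENNReal.ofReal (lam j) * (ballNorm p (x₀ j) (r j))⁻¹ * ballInd (x₀ j) (r j) x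

end Atoms

section Weights

/-- `w` is an `A₁` weight with constant (at most) `A`. -/
def IsA1 (w : Euc n → ℝ) (A : ℝ) : Prop :=
  Measurable w ∧ LocallyIntegrable w volume ∧
    (∀ᵐ x ∂(volume : Measure (Euc n)), 0 < w x) ∧
    ∀ᵐ x ∂(volume : Measure (Euc n)), maximalOp w x ≤ ENNReal.ofReal A * ENNReal.ofReal (w x)

/-- `w` satisfies the reverse Hölder inequality with exponent `s` and constant (at most) `A`. -/
def IsRH (w : Euc n → ℝ) (s A : ℝ) : Prop :=
  ∀ (x : Euc n) (r : ℝ), 0 < r →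
    ((volume (closedBall x r))⁻¹ * ∫⁻ y in closedBall x r, ENNReal.ofReal (w y) ^ s) ^ (1 / s) ≤
      ENNReal.ofReal A *
        ((volume (closedBall x r))⁻¹ * ∫⁻ y in closedBall x r, ENNReal.ofReal (w y))

/-- The conjugate exponent `s' = s/(s-1)`. -/
def conjExp (s : ℝ) : ℝ := s / (s - 1)

end Weights


/-- The non-tangential maximal function `M_{Φ,1} f` with aperture 1. -/
def ntMax (f : Distribution n) (Φ : 𝓢(Euc n, ℝ)) (x : Euc n) : ℝ≥0∞ :=
  ⨆ (t : ℝ) (ht : 0 < t) (y : Euc n) (_ : dist x y < t), (‖distConv f Φ t ht y‖₊ : ℝ≥0∞)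

/-- The tangential maximal function `M_{Φ,T} f`. -/
def tangMax (f : Distribution n) (Φ : 𝓢(Euc n, ℝ)) (T : ℝ) (x : Euc n) : ℝ≥0∞ :=
  ⨆ (t : ℝ) (ht : 0 < t) (y : Euc n),
    (‖distConv f Φ t ht (x - y)‖₊ : ℝ≥0∞) * ENNReal.ofReal ((1 + ‖y‖ / t) ^ (-T))

/-- with `q = n/T`, `M_{Φ,T}f(x)^q ≤ C(n) · M((M_{Φ,1}f)^q)(x)`. -/
theorem statement1 {n : ℕ} (hn : 1 ≤ n) (Φ : 𝓢(Euc n, ℝ)) (T : ℝ) (hT : 0 < T) :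
    ∃ C : ℝ≥0∞, C < ∞ ∧ ∀ (f : Distribution n) (x : Euc n),
      tangMax f Φ T x ^ ((n : ℝ) / T) ≤
        C * maximalFn (fun y => ntMax f Φ y ^ ((n : ℝ) / T)) x := by
  have hn' : (0 : ℝ) < n := by exact_mod_cast hn
  set q : ℝ := (n : ℝ) / T with hq_def
  have hq : 0 < q := div_pos hn' hT
  haveI : Nontrivial (Euc n) := by
    apply Module.nontrivial_of_finrank_pos (R := ℝ)
    rw [finrank_euclideanSpace_fin]
    exact hn
  set v₁ : ℝ≥0∞ := volume (Metric.ball (0 : Euc n) 1) with hv₁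
  have hv₁0 : v₁ ≠ 0 := (measure_ball_pos _ _ one_pos).ne'
  have hv₁top : v₁ ≠ ⊤ := measure_ball_lt_top.ne
  have h2n0 : ((2 : ℝ≥0∞) ^ n) ≠ 0 := by positivity
  have h2ntop : ((2 : ℝ≥0∞) ^ n) ≠ ⊤ := by
    exact ENNReal.pow_ne_top (by norm_num)
  refine ⟨2 ^ n * v₁⁻¹, ?_, ?_⟩
  · exact ENNReal.mul_lt_top h2ntop.lt_top (ENNReal.inv_lt_top.2 (pos_iff_ne_zero.2 hv₁0))
  intro f x
  set M := maximalFn (fun y => ntMax f Φ y ^ q) x with hM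
  have hcoord : ∀ (v : Euc n) (i : Fin n), |v i| ≤ ‖v‖ := by
    intro v i
    rw [EuclideanSpace.norm_eq]
    rw [show |v i| = Real.sqrt (‖v i‖ ^ 2) by
      rw [Real.norm_eq_abs, Real.sqrt_sq_eq_abs, abs_abs]]
    apply Real.sqrt_le_sqrt
    exact Finset.single_le_sum (f := fun j => ‖v j‖ ^ 2)
      (fun j _ => by positivity) (Finset.mem_univ i)
  have keyq : ∀ (t : ℝ) (ht : 0 < t) (y : Euc n),
      ((‖distConv f Φ t ht (x - y)‖₊ : ℝ≥0∞)) ^ q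
        * ENNReal.ofReal ((1 + ‖y‖ / t) ^ (-T)) ^ q ≤ 2 ^ n * v₁⁻¹ * M := by
    intro t ht y
    set a : ℝ≥0∞ := (‖distConv f Φ t ht (x - y)‖₊ : ℝ≥0∞) with ha
    set r : ℝ := t + ‖y‖ with hrdef
    have hr : 0 < r := by positivity
    have hx_mem : x ∈ cube x r := by
      intro i
      rw [sub_self, abs_zero]
      exact hr.le
    have hball_sub : Metric.ball (x - y) t ⊆ cube x r := by
      intro z hz i
      have h1 : |z i - (x i - y i)| ≤ ‖z - (x - y)‖ := by
        have h := hcoord (z - (x - y)) i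
        have : (z - (x - y)) i = z i - (x i - y i) := by
          simp [PiLp.sub_apply]
        rwa [this] at h
      have h2 : ‖z - (x - y)‖ < t := by
        rw [← dist_eq_norm]
        exact Metric.mem_ball.mp hz
      have h3 : |y i| ≤ ‖y‖ := hcoord y i
      have h4 : z i - x i = (z i - (x i - y i)) + (-(y i)) := by ring
      calc |z i - x i| ≤ |z i - (x i - y i)| + |(-(y i))| := by
            rw [h4]; exact abs_add_le _ _
        _ = |z i - (x i - y i)| + |y i| := by rw [abs_neg]
        _ ≤ t + ‖y‖ := by
            have := h1.trans h2.le
            linarith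
    have hnt : ∀ z ∈ Metric.ball (x - y) t, a ≤ ntMax f Φ z := by
      intro z hz
      have hdz : dist z (x - y) < t := Metric.mem_ball.mp hz
      unfold ntMax
      exact le_iSup_of_le t (le_iSup_of_le ht (le_iSup_of_le (x - y)
        (le_iSup_of_le hdz le_rfl)))
    have hcube_vol : volume (cube x r) ≤ ENNReal.ofReal ((2 * r) ^ n) := by
      have hsub : cube x r ⊆ ((MeasurableEquiv.toLp 2 (Fin n → ℝ)).symm) ⁻¹'
          (Set.univ.pi fun i => Set.Icc (x i - r) (x i + r)) := by
        intro z hz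
        intro i _
        have h := abs_sub_le_iff.mp (hz i)
        show z i ∈ Set.Icc _ _
        simp only [Set.mem_Icc]
        constructor
        · linarith [h.2]
        · linarith [h.1]
      calc volume (cube x r)
          ≤ volume (((MeasurableEquiv.toLp 2 (Fin n → ℝ)).symm) ⁻¹'
            (Set.univ.pi fun i => Set.Icc (x i - r) (x i + r))) := measure_mono hsub
        _ = volume (Set.univ.pi fun i : Fin n => Set.Icc (x i - r) (x i + r)) :=
            (EuclideanSpace.volume_preserving_symm_measurableEquiv_toLp (Fin n)).measure_preimage
              (MeasurableSet.univ_pi fun i => measurableSet_Icc).nullMeasurableSet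
        _ = ∏ i : Fin n, volume (Set.Icc (x i - r) (x i + r)) := volume_pi_pi _
        _ = ENNReal.ofReal ((2 * r) ^ n) := by
            have h2 : ∀ i : Fin n, x i + r - (x i - r) = 2 * r := fun i => by ring
            simp only [Real.volume_Icc, h2]
            rw [Finset.prod_const, Finset.card_univ, Fintype.card_fin,
              ← ENNReal.ofReal_pow (by positivity)]
    have hball_vol : volume (Metric.ball (x - y) t) = ENNReal.ofReal (t ^ n) * v₁ := by
      rw [Measure.addHaar_ball volume (x - y) ht.le, finrank_euclideanSpace_fin]
    have hint : a ^ q * (ENNReal.ofReal (t ^ n) * v₁)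
        ≤ ∫⁻ z in cube x r, ntMax f Φ z ^ q := by
      rw [← hball_vol]
      calc a ^ q * volume (Metric.ball (x - y) t)
          = ∫⁻ _ in Metric.ball (x - y) t, a ^ q := (setLIntegral_const _ _).symm
        _ ≤ ∫⁻ z in Metric.ball (x - y) t, ntMax f Φ z ^ q :=
            setLIntegral_mono' measurableSet_ball
              (fun z hz => ENNReal.rpow_le_rpow (hnt z hz) hq.le)
        _ ≤ ∫⁻ z in cube x r, ntMax f Φ z ^ q := lintegral_mono_set hball_sub
    have hmax : (volume (cube x r))⁻¹ * ∫⁻ z in cube x r, ntMax f Φ z ^ q ≤ M := by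
      rw [hM]
      unfold maximalFn
      exact le_iSup_of_le x (le_iSup_of_le r (le_iSup_of_le hr
        (le_iSup_of_le hx_mem le_rfl)))
    have hrt : (0 : ℝ) < r / t := div_pos hr ht
    have hX : ENNReal.ofReal ((1 + ‖y‖ / t) ^ (-T)) ^ q = ENNReal.ofReal ((t / r) ^ n) := by
      have h1 : 1 + ‖y‖ / t = r / t := by
        field_simp
        exact hrdef.symm
      rw [h1, ENNReal.ofReal_rpow_of_pos (Real.rpow_pos_of_pos hrt _)]
      congr 1
      rw [← Real.rpow_mul hrt.le]
      have hTq : -T * q = -(n : ℝ) := by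
        rw [hq_def]
        field_simp
      rw [hTq, Real.rpow_neg hrt.le, Real.rpow_natCast, ← inv_pow, inv_div]
    have e1 : ENNReal.ofReal ((2 * r) ^ n) = 2 ^ n * ENNReal.ofReal (r ^ n) := by
      rw [mul_pow, ENNReal.ofReal_mul (by positivity), ENNReal.ofReal_pow (by norm_num : (0:ℝ) ≤ 2)]
      norm_num
    have hrn0 : ENNReal.ofReal (r ^ n) ≠ 0 := by
      simp [ENNReal.ofReal_eq_zero, not_le]
      positivity
    have c1 : (2 : ℝ≥0∞) ^ n * ((2 : ℝ≥0∞) ^ n)⁻¹ = 1 :=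
      ENNReal.mul_inv_cancel h2n0 h2ntop
    have c2 : v₁⁻¹ * v₁ = 1 := ENNReal.inv_mul_cancel hv₁0 hv₁top
    have harith : ENNReal.ofReal ((t / r) ^ n)
        ≤ 2 ^ n * v₁⁻¹ * ((volume (cube x r))⁻¹ * (ENNReal.ofReal (t ^ n) * v₁)) := by
      have hinv : (ENNReal.ofReal ((2 * r) ^ n))⁻¹ ≤ (volume (cube x r))⁻¹ :=
        ENNReal.inv_le_inv' hcube_vol
      have heq : ENNReal.ofReal ((t / r) ^ n)
          = 2 ^ n * v₁⁻¹ * ((ENNReal.ofReal ((2 * r) ^ n))⁻¹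
            * (ENNReal.ofReal (t ^ n) * v₁)) := by
        rw [e1, ENNReal.mul_inv (Or.inl h2n0) (Or.inl h2ntop)]
        rw [div_pow, ENNReal.ofReal_div_of_pos (by positivity), div_eq_mul_inv]
        calc ENNReal.ofReal (t ^ n) * (ENNReal.ofReal (r ^ n))⁻¹
            = ((2:ℝ≥0∞) ^ n * ((2:ℝ≥0∞) ^ n)⁻¹) * (v₁⁻¹ * v₁)
              * (ENNReal.ofReal (t ^ n) * (ENNReal.ofReal (r ^ n))⁻¹) := by
              rw [c1, c2, one_mul, one_mul]
          _ = 2 ^ n * v₁⁻¹ * (((2:ℝ≥0∞) ^ n)⁻¹ * (ENNReal.ofReal (r ^ n))⁻¹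
              * (ENNReal.ofReal (t ^ n) * v₁)) := by ring
      rw [heq]
      gcongr
    calc a ^ q * ENNReal.ofReal ((1 + ‖y‖ / t) ^ (-T)) ^ q
        = a ^ q * ENNReal.ofReal ((t / r) ^ n) := by rw [hX]
      _ ≤ a ^ q * (2 ^ n * v₁⁻¹ * ((volume (cube x r))⁻¹
          * (ENNReal.ofReal (t ^ n) * v₁))) := mul_le_mul_right harith _
      _ = 2 ^ n * v₁⁻¹ * ((volume (cube x r))⁻¹
          * (a ^ q * (ENNReal.ofReal (t ^ n) * v₁))) := by ring
      _ ≤ 2 ^ n * v₁⁻¹ * ((volume (cube x r))⁻¹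
          * ∫⁻ z in cube x r, ntMax f Φ z ^ q) := by gcongr
      _ ≤ 2 ^ n * v₁⁻¹ * M := by gcongr
  have hsup : tangMax f Φ T x ≤ (2 ^ n * v₁⁻¹ * M) ^ (1 / q) := by
    unfold tangMax
    refine iSup_le fun t => iSup_le fun ht => iSup_le fun y => ?_
    have hterm := keyq t ht y
    have : ((‖distConv f Φ t ht (x - y)‖₊ : ℝ≥0∞))
        * ENNReal.ofReal ((1 + ‖y‖ / t) ^ (-T))
        = (((‖distConv f Φ t ht (x - y)‖₊ : ℝ≥0∞)) ^ q
          * ENNReal.ofReal ((1 + ‖y‖ / t) ^ (-T)) ^ q) ^ (1 / q) := by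
      rw [← ENNReal.mul_rpow_of_nonneg _ _ hq.le, ← ENNReal.rpow_mul,
        mul_one_div_cancel hq.ne', ENNReal.rpow_one]
    rw [this]
    exact ENNReal.rpow_le_rpow hterm (by positivity)
  calc tangMax f Φ T x ^ q ≤ ((2 ^ n * v₁⁻¹ * M) ^ (1 / q)) ^ q :=
        ENNReal.rpow_le_rpow hsup hq.le
    _ = 2 ^ n * v₁⁻¹ * M := by
        rw [← ENNReal.rpow_mul, one_div_mul_cancel hq.ne', ENNReal.rpow_one]

end VarHardy
end
end

section
/- (Pointwise decay of a singular integral applied to an atom.) Let n ≥ 1, 0 < p₀ ≤ 1, d = ⌊n(1/p₀ − 1)⌋, and 1 < s < ∞. Let K : ℝⁿ∖{0} → ℂ be (d+1)-times continuously differentiable with |∂^β K(x)| ≤ C₀ |x|^{−n−|β|} for all multi-indices β with |β| ≤ d+1 and all x ≠ 0. Let p(·) ∈ M𝒫₀ with exponent p₀, and let a be a (p(·), s) atom supported on the ball B = B(x₀, r). Then for every x with |x − x₀| ≥ 2r, | ∫_B K(x−y) a(y) dy | ≤ C |B|^{1 + (d+1)/n} ‖χ_B‖_{p(·)}^{−1}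 |x − x₀|^{−(n+d+1)}, where C depends only on C₀, n, p₀ and s. -/
open MeasureTheory Metric Filter Topology ENNReal SchwartzMap
open scoped NNReal

noncomputable section

namespace VarHardy

variable {n : ℕ}

section Statement14Aux

open scoped Nat

private lemma monomial_prod_eq {n k : ℕ} (y : Euc n) (t : Finset (Fin k)) (f : Fin k → Fin n) :
    ∏ j ∈ t, y (f j) = ∏ i : Fin n, (y i) ^ (t.filter fun j => f j = i).card := by
  calc ∏ j ∈ t, y (f j)
      = ∏ i : Fin n, ∏ j ∈ t.filter fun j => f j = i, y (f j) :=
        (Finset.prod_fiberwise_of_maps_to (fun j _ => Finset.mem_univ (f j)) _).symm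
    _ = ∏ i : Fin n, ∏ _j ∈ t.filter fun j => f j = i, y i := by
        refine Finset.prod_congr rfl fun i _ => Finset.prod_congr rfl fun j hj => ?_
        rw [(Finset.mem_filter.1 hj).2]
    _ = _ := by simp

private lemma integrableOn_smul_cont {n : ℕ} {E : Type*} [NormedAddCommGroup E]
    [NormedSpace ℝ E] {a : Euc n → ℝ} {x₀ : Euc n} {r : ℝ}
    (ha : IntegrableOn a (closedBall x₀ r) volume) (hameas : Measurable a)
    {phi : Euc n → E} (hphi : ContinuousOn phi (closedBall x₀ r)) :
    IntegrableOn (fun y => a y • phi y) (closedBall x₀ r) volume := by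
  obtain ⟨M, hM⟩ := (isCompact_closedBall x₀ r).exists_bound_of_continuousOn hphi
  refine Integrable.mono' (ha.norm.const_mul M)
    (hameas.aestronglyMeasurable.smul (hphi.aestronglyMeasurable measurableSet_closedBall)) ?_
  refine (ae_restrict_iff' measurableSet_closedBall).2 (Filter.Eventually.of_forall fun y hy => ?_)
  rw [norm_smul]
  calc ‖a y‖ * ‖phi y‖ ≤ ‖a y‖ * M := by
        exact mul_le_mul_of_nonneg_left (hM y hy) (norm_nonneg _)
    _ = M * ‖a y‖ := mul_comm _ _

private lemma integrable_global_of_supp {n : ℕ} {E : Type*} [NormedAddCommGroup E]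
    [NormedSpace ℝ E] {a : Euc n → ℝ} {x₀ : Euc n} {r : ℝ}
    (hsupp : ∀ y ∉ closedBall x₀ r, a y = 0) {phi : Euc n → E}
    (h : IntegrableOn (fun y => a y • phi y) (closedBall x₀ r) volume) :
    Integrable (fun y => a y • phi y) volume := by
  have heq : (fun y => a y • phi y) = (closedBall x₀ r).indicator (fun y => a y • phi y) := by
    funext y
    by_cases hy : y ∈ closedBall x₀ r
    · rw [Set.indicator_of_mem hy]
    · rw [Set.indicator_of_notMem hy, hsupp y hy, zero_smul]
  rw [heq, integrable_indicator_iff measurableSet_closedBall]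
  exact h

private lemma integral_atom_poly_zero {n d k : ℕ} {p₀ : ℝ}
    (hd : (d : ℤ) = ⌊(n : ℝ) * (1 / p₀ - 1)⌋)
    {a : Euc n → ℝ} {x₀ : Euc n} {r : ℝ} (hameas : Measurable a)
    (hsupp : ∀ y ∉ closedBall x₀ r, a y = 0)
    (haint : IntegrableOn a (closedBall x₀ r) volume)
    (hmom : ∀ α : Fin n → ℕ, ((∑ i, α i : ℕ) : ℤ) ≤ ⌊(n : ℝ) * (1 / p₀ - 1)⌋ →
      ∫ x : Euc n, a x * ∏ i, (x i) ^ α i = 0)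
    (hk : k ≤ d) (f : Fin k → Fin n) :
    ∫ y : Euc n, a y * ∏ j : Fin k, (x₀ (f j) - y (f j)) = 0 := by
  have hmonoint : ∀ t : Finset (Fin k),
      Integrable (fun y => a y * ∏ j ∈ t, y (f j)) volume := by
    intro t
    have hc : ContinuousOn (fun y : Euc n => ∏ j ∈ t, y (f j)) (closedBall x₀ r) :=
      (continuous_finset_prod t fun j _ => (continuous_apply (f j)).comp (PiLp.continuous_ofLp _ _)).continuousOn
    have := integrable_global_of_supp hsupp (integrableOn_smul_cont haint hameas hc)
    simpa [smul_eq_mul] using this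
  have hzero : ∀ t : Finset (Fin k), ∫ y : Euc n, a y * ∏ j ∈ t, y (f j) = 0 := by
    intro t
    have hcard : t.card ≤ d := le_trans (le_trans (Finset.card_le_card (Finset.subset_univ t))
      (by simp)) hk
    have hsum : ∑ i, (t.filter fun j => f j = i).card = t.card :=
      (Finset.card_eq_sum_card_fiberwise fun j _ => Finset.mem_univ (f j)).symm
    have h := hmom (fun i => (t.filter fun j => f j = i).card) (by
      rw [← hd, hsum]; exact_mod_cast hcard)
    calc ∫ y : Euc n, a y * ∏ j ∈ t, y (f j)
        = ∫ y : Euc n, a y * ∏ i, (y i) ^ (t.filter fun j => f j = i).card := by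
          simp_rw [monomial_prod_eq]
      _ = 0 := h
  have hexp : ∀ y : Euc n, a y * ∏ j : Fin k, (x₀ (f j) - y (f j)) =
      ∑ t ∈ (Finset.univ : Finset (Fin k)).powerset,
        ((-1 : ℝ) ^ t.card * ∏ j ∈ Finset.univ \ t, x₀ (f j)) *
          (a y * ∏ j ∈ t, y (f j)) := by
    intro y
    have h1 : ∏ j : Fin k, (x₀ (f j) - y (f j))
        = ∏ j : Fin k, (-(y (f j)) + x₀ (f j)) :=
      Finset.prod_congr rfl fun j _ => by ring
    rw [h1, Finset.prod_add, Finset.mul_sum]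
    refine Finset.sum_congr rfl fun t _ => ?_
    have h2 : ∏ j ∈ t, -(y (f j)) = (-1 : ℝ) ^ t.card * ∏ j ∈ t, y (f j) := by
      calc ∏ j ∈ t, -(y (f j)) = ∏ j ∈ t, ((-1 : ℝ) * y (f j)) :=
            Finset.prod_congr rfl fun j _ => (neg_one_mul _).symm
        _ = (∏ _j ∈ t, (-1 : ℝ)) * ∏ j ∈ t, y (f j) := Finset.prod_mul_distrib
        _ = (-1 : ℝ) ^ t.card * ∏ j ∈ t, y (f j) := by rw [Finset.prod_const]
    rw [h2]; ring
  calc ∫ y : Euc n, a y * ∏ j : Fin k, (x₀ (f j) - y (f j))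
      = ∫ y : Euc n, ∑ t ∈ (Finset.univ : Finset (Fin k)).powerset,
          ((-1 : ℝ) ^ t.card * ∏ j ∈ Finset.univ \ t, x₀ (f j)) *
            (a y * ∏ j ∈ t, y (f j)) := by simp_rw [hexp]
    _ = ∑ t ∈ (Finset.univ : Finset (Fin k)).powerset,
          ∫ y : Euc n, ((-1 : ℝ) ^ t.card * ∏ j ∈ Finset.univ \ t, x₀ (f j)) *
            (a y * ∏ j ∈ t, y (f j)) :=
        integral_finset_sum _ fun t _ => (hmonoint t).const_mul _
    _ = 0 := Finset.sum_eq_zero fun t _ => by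
        rw [integral_const_mul, hzero t, mul_zero]

private lemma euc_repr {n : ℕ} (z : Euc n) :
    z = ∑ i : Fin n, z i • EuclideanSpace.single i (1 : ℝ) := by
  have h := (EuclideanSpace.basisFun (Fin n) ℝ).sum_repr z
  simp only [EuclideanSpace.basisFun_repr, EuclideanSpace.basisFun_apply] at h
  exact h.symm

private lemma integral_atom_multilinear_zero {n d k : ℕ} {p₀ : ℝ}
    (hd : (d : ℤ) = ⌊(n : ℝ) * (1 / p₀ - 1)⌋)
    {a : Euc n → ℝ} {x₀ : Euc n} {r : ℝ} (hameas : Measurable a)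
    (hsupp : ∀ y ∉ closedBall x₀ r, a y = 0)
    (haint : IntegrableOn a (closedBall x₀ r) volume)
    (hmom : ∀ α : Fin n → ℕ, ((∑ i, α i : ℕ) : ℤ) ≤ ⌊(n : ℝ) * (1 / p₀ - 1)⌋ →
      ∫ x : Euc n, a x * ∏ i, (x i) ^ α i = 0)
    (hk : k ≤ d) (W : ContinuousMultilinearMap ℝ (fun _ : Fin k => Euc n) ℂ) :
    ∫ y in closedBall x₀ r, a y • W (fun _ => x₀ - y) = 0 := by
  have hW : ∀ y : Euc n, W (fun _ => x₀ - y) =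
      ∑ g : Fin k → Fin n, (∏ j : Fin k, (x₀ (g j) - y (g j))) •
        W (fun j => EuclideanSpace.single (g j) (1 : ℝ)) := by
    intro y
    calc W (fun _ => x₀ - y)
        = W (fun _ => ∑ i : Fin n, (x₀ - y) i • EuclideanSpace.single i (1 : ℝ)) := by
          exact congrArg W (funext fun _ => euc_repr (x₀ - y))
      _ = ∑ g : Fin k → Fin n, W (fun j => (x₀ - y) (g j) •
            EuclideanSpace.single (g j) (1 : ℝ)) :=
          W.toMultilinearMap.map_sum (fun _ i => (x₀ - y) i • EuclideanSpace.single i (1 : ℝ))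
      _ = ∑ g : Fin k → Fin n, (∏ j : Fin k, (x₀ - y) (g j)) •
            W (fun j => EuclideanSpace.single (g j) (1 : ℝ)) := by
          refine Finset.sum_congr rfl fun g _ => ?_
          exact W.toMultilinearMap.map_smul_univ (fun j => (x₀ - y) (g j)) _
      _ = _ := rfl
  have hint : ∀ g : Fin k → Fin n,
      IntegrableOn (fun y => (a y * ∏ j : Fin k, (x₀ (g j) - y (g j))) •
        W (fun j => EuclideanSpace.single (g j) (1 : ℝ))) (closedBall x₀ r) volume := by
    intro g
    have hphi : ContinuousOn (fun y : Euc n => (∏ j : Fin k, (x₀ (g j) - y (g j))) •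
        W (fun j => EuclideanSpace.single (g j) (1 : ℝ))) (closedBall x₀ r) := by
      refine Continuous.continuousOn ?_
      exact (continuous_finset_prod _ fun j _ =>
        (continuous_const.sub ((continuous_apply (g j)).comp (PiLp.continuous_ofLp 2 _) : Continuous fun y : Euc n => y (g j)))).smul continuous_const
    exact (integrableOn_smul_cont haint hameas hphi).congr
      (Filter.Eventually.of_forall fun y => smul_smul _ _ _)
  calc ∫ y in closedBall x₀ r, a y • W (fun _ => x₀ - y)
      = ∫ y in closedBall x₀ r, ∑ g : Fin k → Fin n,
          (a y * ∏ j : Fin k, (x₀ (g j) - y (g j))) •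
            W (fun j => EuclideanSpace.single (g j) (1 : ℝ)) := by
        refine integral_congr_ae (Filter.Eventually.of_forall fun y => ?_)
        show a y • W (fun _ => x₀ - y) = _
        rw [hW y, Finset.smul_sum]
        exact Finset.sum_congr rfl fun g _ => (smul_smul _ _ _)
    _ = ∑ g : Fin k → Fin n, ∫ y in closedBall x₀ r,
          (a y * ∏ j : Fin k, (x₀ (g j) - y (g j))) •
            W (fun j => EuclideanSpace.single (g j) (1 : ℝ)) :=
        integral_finset_sum _ fun g _ => hint g
    _ = ∑ g : Fin k → Fin n, (∫ y in closedBall x₀ r,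
          a y * ∏ j : Fin k, (x₀ (g j) - y (g j))) •
            W (fun j => EuclideanSpace.single (g j) (1 : ℝ)) := by
        refine Finset.sum_congr rfl fun g _ => integral_smul_const _ _
    _ = 0 := by
        refine Finset.sum_eq_zero fun g _ => ?_
        rw [setIntegral_eq_integral_of_forall_compl_eq_zero
          (fun y hy => by rw [hsupp y hy, zero_mul]),
          integral_atom_poly_zero hd hameas hsupp haint hmom hk g, zero_smul]

open scoped Nat

private lemma key_taylor_bound {n d : ℕ} {K : Euc n → ℂ}
    (hK : ContDiffOn ℝ (d + 1 : ℕ) K {(0 : Euc n)}ᶜ)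
    {C₀ : ℝ} (hC₀ : 0 ≤ C₀)
    (hKb : ∀ z : Euc n, z ≠ 0 → ‖iteratedFDerivWithin ℝ (d + 1) K {(0 : Euc n)}ᶜ z‖ ≤
      C₀ * ‖z‖ ^ (-(n : ℝ) - (d + 1 : ℕ)))
    {c v : Euc n} {r : ℝ} (hr : 0 < r) (hv : ‖v‖ ≤ r) (hc : 2 * r ≤ ‖c‖) :
    ‖K (c - v) - ∑ k ∈ Finset.range (d + 1),
        (k ! : ℝ)⁻¹ • (iteratedFDerivWithin ℝ k K {(0 : Euc n)}ᶜ c) (fun _ => -v)‖ ≤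
      C₀ * (‖c‖ / 2) ^ (-(n : ℝ) - (d + 1 : ℕ)) * r ^ (d + 1) / d ! := by
  set U : Set (Euc n) := {(0 : Euc n)}ᶜ with hUdef
  have hUo : IsOpen U := isOpen_compl_singleton
  have hcpos : 0 < ‖c‖ := lt_of_lt_of_le (by linarith) hc
  have hline : ∀ t ∈ Set.Icc (0 : ℝ) 1, ‖c‖ / 2 ≤ ‖c - t • v‖ := by
    intro t ht
    have h1 : ‖t • v‖ ≤ r := by
      rw [norm_smul, Real.norm_eq_abs, abs_of_nonneg ht.1]
      calc t * ‖v‖ ≤ 1 * r := mul_le_mul ht.2 hv (norm_nonneg v) zero_le_one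
        _ = r := one_mul r
    calc ‖c‖ / 2 ≤ ‖c‖ - ‖t • v‖ := by linarith
      _ ≤ ‖c - t • v‖ := norm_sub_norm_le c (t • v)
  have hne : ∀ t ∈ Set.Icc (0 : ℝ) 1, c - t • v ∈ U := by
    intro t ht
    have h2 : (0 : ℝ) < ‖c - t • v‖ := lt_of_lt_of_le (by linarith) (hline t ht)
    simpa [hUdef, Set.mem_compl_singleton_iff] using norm_pos_iff.1 h2
  have hg : ContDiffOn ℝ (d + 1 : ℕ) (fun t : ℝ => K (c - t • v)) (Set.Icc 0 1) :=
    hK.comp ((contDiff_const.sub (contDiff_id.smul contDiff_const)).contDiffOn) hne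
  have hT := hK.ftaylorSeriesWithin hUo.uniqueDiffOn
  have hder : ∀ k, k < d + 1 → ∀ t : ℝ, c - t • v ∈ U →
      HasDerivAt (fun u : ℝ => (iteratedFDerivWithin ℝ k K U (c - u • v)) (fun _ => -v))
        ((iteratedFDerivWithin ℝ (k + 1) K U (c - t • v)) (fun _ => -v)) t := by
    intro k hk t htm
    have hF : HasFDerivAt (fun z => iteratedFDerivWithin ℝ k K U z)
        ((ftaylorSeriesWithin ℝ K U (c - t • v) (k + 1)).curryLeft) (c - t • v) :=
      (hT.fderivWithin k (by exact_mod_cast hk) _ htm).hasFDerivAt (hUo.mem_nhds htm)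
    have hl : HasDerivAt (fun u : ℝ => c - u • v) (-v) t := by
      simpa using ((hasDerivAt_id t).smul_const v).const_sub c
    have h2 : HasDerivAt (fun u : ℝ => iteratedFDerivWithin ℝ k K U (c - u • v))
        ((ftaylorSeriesWithin ℝ K U (c - t • v) (k + 1)).curryLeft (-v)) t :=
      hF.comp_hasDerivAt t hl
    have h3 := ((ContinuousMultilinearMap.apply ℝ (fun _ : Fin k => Euc n) ℂ
      (fun _ => -v)).hasFDerivAt).comp_hasDerivAt t h2
    convert h3 using 1
    show _ = ((ftaylorSeriesWithin ℝ K U (c - t • v) (k + 1)).curryLeft (-v)) (fun _ => -v)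
    rw [ContinuousMultilinearMap.curryLeft_apply]
    congr 1
    ext i
    exact Fin.cases rfl (fun _ => rfl) i
    all_goals rfl
  have hiter : ∀ k, k ≤ d + 1 → ∀ t ∈ Set.Icc (0 : ℝ) 1,
      iteratedDerivWithin k (fun u : ℝ => K (c - u • v)) (Set.Icc 0 1) t
        = (iteratedFDerivWithin ℝ k K U (c - t • v)) (fun _ => -v) := by
    intro k
    induction k with
    | zero =>
      intro _ t ht
      rw [iteratedDerivWithin_zero]
      exact (iteratedFDerivWithin_zero_apply _).symm
    | succ k ih =>
      intro hk t ht
      have hklt : k < d + 1 := hk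
      rw [iteratedDerivWithin_succ]
      have heq : Set.EqOn (iteratedDerivWithin k (fun u : ℝ => K (c - u • v)) (Set.Icc 0 1))
          (fun u => (iteratedFDerivWithin ℝ k K U (c - u • v)) (fun _ => -v)) (Set.Icc 0 1) :=
        fun u hu => ih (Nat.le_of_succ_le hk) u hu
      rw [derivWithin_congr heq (heq ht)]
      exact ((hder k hklt t (hne t ht)).hasDerivWithinAt).derivWithin
        (uniqueDiffOn_Icc_zero_one t ht)
  have hexp_nonpos : (-(n : ℝ) - (d + 1 : ℕ)) ≤ 0 := by
    have h1 : (0:ℝ) ≤ (n : ℝ) := Nat.cast_nonneg n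
    have h2 : (0:ℝ) ≤ ((d + 1 : ℕ) : ℝ) := Nat.cast_nonneg _
    linarith
  have hbound : ∀ t ∈ Set.Icc (0 : ℝ) 1,
      ‖iteratedDerivWithin (d + 1) (fun u : ℝ => K (c - u • v)) (Set.Icc 0 1) t‖ ≤
        C₀ * (‖c‖ / 2) ^ (-(n : ℝ) - (d + 1 : ℕ)) * r ^ (d + 1) := by
    intro t ht
    rw [hiter (d + 1) le_rfl t ht]
    have hop : ‖(iteratedFDerivWithin ℝ (d + 1) K U (c - t • v)) (fun _ => -v)‖ ≤
        ‖iteratedFDerivWithin ℝ (d + 1) K U (c - t • v)‖ * ‖v‖ ^ (d + 1) := by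
      have h := (iteratedFDerivWithin ℝ (d + 1) K U (c - t • v)).le_opNorm (fun _ => -v)
      simpa [Finset.prod_const] using h
    have hz : c - t • v ≠ 0 := hne t ht
    have hKz := hKb _ hz
    have hrad : ‖c - t • v‖ ^ (-(n : ℝ) - (d + 1 : ℕ)) ≤
        (‖c‖ / 2) ^ (-(n : ℝ) - (d + 1 : ℕ)) :=
      Real.rpow_le_rpow_of_nonpos (by linarith) (hline t ht) hexp_nonpos
    calc ‖(iteratedFDerivWithin ℝ (d + 1) K U (c - t • v)) (fun _ => -v)‖
        ≤ ‖iteratedFDerivWithin ℝ (d + 1) K U (c - t • v)‖ * ‖v‖ ^ (d + 1) := hop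
      _ ≤ (C₀ * ‖c - t • v‖ ^ (-(n : ℝ) - (d + 1 : ℕ))) * r ^ (d + 1) := by
          apply mul_le_mul hKz (pow_le_pow_left₀ (norm_nonneg v) hv _)
            (pow_nonneg (norm_nonneg v) _)
          exact mul_nonneg hC₀ (Real.rpow_nonneg (norm_nonneg _) _)
      _ ≤ C₀ * (‖c‖ / 2) ^ (-(n : ℝ) - (d + 1 : ℕ)) * r ^ (d + 1) := by
          apply mul_le_mul_of_nonneg_right _ (pow_nonneg hr.le _)
          exact mul_le_mul_of_nonneg_left hrad hC₀
  have hg' : ContDiffOn ℝ ((d : ℕ∞) + 1) (fun t : ℝ => K (c - t • v)) (Set.Icc 0 1) := by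
    exact_mod_cast hg
  have htb := taylor_mean_remainder_bound (zero_le_one) hg'
    (Set.right_mem_Icc.2 zero_le_one) hbound
  rw [show c - (1 : ℝ) • v = c - v from by rw [one_smul]] at htb
  have h2 : taylorWithinEval (fun t : ℝ => K (c - t • v)) d (Set.Icc 0 1) 0 1 =
      ∑ k ∈ Finset.range (d + 1),
        (k ! : ℝ)⁻¹ • (iteratedFDerivWithin ℝ k K U c) (fun _ => -v) := by
    rw [taylor_within_apply]
    refine Finset.sum_congr rfl fun k hkmem => ?_
    have hk' : k ≤ d + 1 := le_of_lt (Finset.mem_range.1 hkmem)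
    rw [hiter k hk' 0 (Set.left_mem_Icc.2 zero_le_one)]
    norm_num
  rw [h2] at htb
  calc ‖K (c - v) - ∑ k ∈ Finset.range (d + 1),
        (k ! : ℝ)⁻¹ • (iteratedFDerivWithin ℝ k K U c) (fun _ => -v)‖
      ≤ C₀ * (‖c‖ / 2) ^ (-(n : ℝ) - (d + 1 : ℕ)) * r ^ (d + 1) * (1 - 0) ^ (d + 1) / d ! :=
        htb
    _ = C₀ * (‖c‖ / 2) ^ (-(n : ℝ) - (d + 1 : ℕ)) * r ^ (d + 1) / d ! := by norm_num

private theorem statement14_aux {n : ℕ} (hn : 1 ≤ n) (p₀ : ℝ) (hp₀pos : 0 < p₀) (hp₀ : p₀ ≤ 1)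
    (d : ℕ) (hd : (d : ℤ) = ⌊(n : ℝ) * (1 / p₀ - 1)⌋)
    (s : ℝ) (hs : 1 < s) (C₀ : ℝ) (K : Euc n → ℂ)
    (hK : ContDiffOn ℝ (d + 1 : ℕ) K {(0 : Euc n)}ᶜ)
    (hKbound : ∀ k : ℕ, k ≤ d + 1 → ∀ x : Euc n, x ≠ 0 →
      ‖iteratedFDerivWithin ℝ k K {(0 : Euc n)}ᶜ x‖ ≤ C₀ * ‖x‖ ^ (-(n : ℝ) - k)) :
    ∃ C : ℝ≥0∞, C < ∞ ∧
    ∀ (a : Euc n → ℝ) (x₀ : Euc n) (r : ℝ),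
      Measurable a → 0 < r → (∀ y ∉ closedBall x₀ r, a y = 0) →
      ∀ (N : ℝ≥0∞),
      ((∫⁻ x, (‖a x‖₊ : ℝ≥0∞) ^ s) ^ (1 / s) ≤ (volume (closedBall x₀ r)) ^ (1 / s) * N⁻¹) →
      (∀ α : Fin n → ℕ, ((∑ i, α i : ℕ) : ℤ) ≤ ⌊(n : ℝ) * (1 / p₀ - 1)⌋ →
        ∫ x : Euc n, a x * ∏ i, (x i) ^ α i = 0) →
    ∀ x : Euc n, 2 * r ≤ ‖x - x₀‖ →
      (‖∫ y in closedBall x₀ r, K (x - y) * (a y : ℂ)‖₊ : ℝ≥0∞) ≤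
        C * volume (closedBall x₀ r) ^ (1 + ((d : ℝ) + 1) / n) * N⁻¹ *
          ENNReal.ofReal (‖x - x₀‖ ^ (-((n : ℝ) + d + 1))) := by
  have hn' : (0 : ℝ) < n := by exact_mod_cast hn
  set κ : ℝ≥0∞ := volume (ball (0 : Euc n) 1) with hκdef
  have hκ0 : κ ≠ 0 := (measure_ball_pos volume (0 : Euc n) one_pos).ne'
  have hκT : κ ≠ ⊤ := measure_ball_lt_top.ne
  set θ : ℝ := ((d : ℝ) + 1) / n with hθdef
  have hθ0 : (0 : ℝ) ≤ θ := by positivity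
  have hκθ0 : κ ^ θ ≠ 0 := by
    simp only [ne_eq, ENNReal.rpow_eq_zero_iff, not_or]
    exact ⟨fun h => hκ0 h.1, fun h => hκT h.1⟩
  have hκθT : κ ^ θ ≠ ⊤ := ENNReal.rpow_ne_top_of_nonneg hθ0 hκT
  have hC₀ : 0 ≤ C₀ := by
    have hz : (EuclideanSpace.single (⟨0, hn⟩ : Fin n) (1 : ℝ) : Euc n) ≠ 0 := by
      intro h
      have h2 := congrArg (fun w : Euc n => ‖w‖) h
      simp only [EuclideanSpace.norm_single, norm_one, norm_zero] at h2
      exact one_ne_zero h2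
    have h1 := (norm_nonneg _).trans (hKbound 0 (Nat.zero_le _) _ hz)
    rw [EuclideanSpace.norm_single, norm_one, Real.one_rpow, mul_one] at h1
    exact h1
  set M₀ : ℝ := C₀ * 2 ^ ((n : ℝ) + d + 1) / d ! with hM₀def
  have hM₀ : 0 ≤ M₀ := by positivity
  refine ⟨(ENNReal.ofReal M₀ + 1) * (κ ^ θ)⁻¹, ?_, ?_⟩
  · refine ENNReal.mul_lt_top ?_ ?_
    · exact ENNReal.add_lt_top.2 ⟨ENNReal.ofReal_lt_top, ENNReal.one_lt_top⟩
    · exact ENNReal.inv_lt_top.2 (pos_iff_ne_zero.2 hκθ0)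
  intro a x₀ r hameas hr hsupp N hsize hmom x hx
  have hcnorm : (0 : ℝ) < ‖x - x₀‖ := lt_of_lt_of_le (by linarith) hx
  have hOne0 : ENNReal.ofReal (‖x - x₀‖ ^ (-((n : ℝ) + d + 1))) ≠ 0 := by
    simp only [ne_eq, ENNReal.ofReal_eq_zero, not_le]
    exact Real.rpow_pos_of_pos hcnorm _
  have hvol : volume (closedBall x₀ r) = ENNReal.ofReal (r ^ n) * κ := by
    rw [Measure.addHaar_closedBall volume x₀ hr.le, finrank_euclideanSpace_fin]
  have hvol0 : volume (closedBall x₀ r) ≠ 0 := (measure_closedBall_pos volume x₀ hr).ne'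
  have hvolT : volume (closedBall x₀ r) ≠ ⊤ := measure_closedBall_lt_top.ne
  have hvolpow : volume (closedBall x₀ r) ^ ((1 : ℝ) + θ)
      = volume (closedBall x₀ r) * (ENNReal.ofReal (r ^ (d + 1)) * κ ^ θ) := by
    rw [ENNReal.rpow_add 1 θ hvol0 hvolT, ENNReal.rpow_one]
    congr 1
    rw [hvol, ENNReal.mul_rpow_of_nonneg _ _ hθ0, ENNReal.ofReal_rpow_of_pos (pow_pos hr n)]
    congr 2
    rw [← Real.rpow_natCast r n, ← Real.rpow_mul hr.le]
    rw [show (n : ℝ) * θ = ((d + 1 : ℕ) : ℝ) from by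
      rw [hθdef]; push_cast; rw [mul_comm, div_mul_cancel₀ _ hn'.ne']]
    rw [Real.rpow_natCast]
  by_cases hN : N = 0
  · rw [hN, ENNReal.inv_zero]
    refine le_top.trans_eq ?_
    have h1 : (ENNReal.ofReal M₀ + 1) * (κ ^ θ)⁻¹ *
        volume (closedBall x₀ r) ^ (1 + ((d : ℝ) + 1) / n) ≠ 0 := by
      refine mul_ne_zero (mul_ne_zero ?_ ?_) ?_
      · exact (lt_of_lt_of_le zero_lt_one le_add_self).ne'
      · exact ENNReal.inv_ne_zero.2 hκθT
      · simp only [ne_eq, ENNReal.rpow_eq_zero_iff, not_or]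
        exact ⟨fun h => hvol0 h.1, fun h => hvolT h.1⟩
    rw [ENNReal.mul_top h1, ENNReal.top_mul hOne0]
  have hNinvT : N⁻¹ ≠ ⊤ := ENNReal.inv_ne_top.2 hN
  -- Hölder
  have hconj : s.HolderConjugate (Real.conjExponent s) := Real.HolderConjugate.conjExponent hs
  have hsize' : (∫⁻ y in closedBall x₀ r, (‖a y‖₊ : ℝ≥0∞) ^ s) ^ (1 / s) ≤
      volume (closedBall x₀ r) ^ (1 / s) * N⁻¹ :=
    le_trans (ENNReal.rpow_le_rpow (lintegral_mono' Measure.restrict_le_self le_rfl)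
      (by positivity)) hsize
  have hholder : ∫⁻ y in closedBall x₀ r, (‖a y‖₊ : ℝ≥0∞) ≤ volume (closedBall x₀ r) * N⁻¹ := by
    have h := ENNReal.lintegral_mul_le_Lp_mul_Lq (volume.restrict (closedBall x₀ r)) hconj
      (f := fun y => (‖a y‖₊ : ℝ≥0∞)) (g := fun _ => 1)
      (hameas.nnnorm.coe_nnreal_ennreal.aemeasurable) aemeasurable_const
    simp only [Pi.mul_apply, mul_one, ENNReal.one_rpow, lintegral_one,
      Measure.restrict_apply_univ] at h
    calc ∫⁻ y in closedBall x₀ r, (‖a y‖₊ : ℝ≥0∞)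
        ≤ (∫⁻ y in closedBall x₀ r, (‖a y‖₊ : ℝ≥0∞) ^ s) ^ (1 / s) *
            volume (closedBall x₀ r) ^ (1 / Real.conjExponent s) := h
      _ ≤ volume (closedBall x₀ r) ^ (1 / s) * N⁻¹ *
            volume (closedBall x₀ r) ^ (1 / Real.conjExponent s) :=
          mul_le_mul_left hsize' _
      _ = volume (closedBall x₀ r) ^ (1 / s) * volume (closedBall x₀ r) ^
            (1 / Real.conjExponent s) * N⁻¹ := mul_right_comm _ _ _
      _ = volume (closedBall x₀ r) * N⁻¹ := by
          rw [← ENNReal.rpow_add _ _ hvol0 hvolT,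
            show 1 / s + 1 / Real.conjExponent s = 1 from by
              rw [one_div, one_div]; exact hconj.inv_add_inv_eq_one,
            ENNReal.rpow_one]
  have haint : IntegrableOn a (closedBall x₀ r) volume :=
    ⟨hameas.aestronglyMeasurable,
      hholder.trans_lt (ENNReal.mul_lt_top hvolT.lt_top hNinvT.lt_top)⟩
  -- geometry
  have hvnorm : ∀ y ∈ closedBall x₀ r, ‖y - x₀‖ ≤ r := fun y hy => by
    rwa [← mem_closedBall_iff_norm]
  have hBne : ∀ y ∈ closedBall x₀ r, x - y ≠ 0 := by
    intro y hy h0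
    have h1 : ‖x - y‖ = 0 := by rw [h0, norm_zero]
    have h2 : ‖x - x₀‖ - ‖y - x₀‖ ≤ ‖x - y‖ := by
      calc ‖x - x₀‖ - ‖y - x₀‖ ≤ ‖(x - x₀) - (y - x₀)‖ := norm_sub_norm_le _ _
        _ = ‖x - y‖ := by rw [show x - x₀ - (y - x₀) = x - y from by abel]
    have := hvnorm y hy
    linarith
  -- Taylor polynomial
  set T : Euc n → ℂ := fun y => ∑ k ∈ Finset.range (d + 1),
    (k ! : ℝ)⁻¹ • (iteratedFDerivWithin ℝ k K {(0 : Euc n)}ᶜ (x - x₀)) (fun _ => x₀ - y)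
    with hTdef
  have harith : C₀ * (‖x - x₀‖ / 2) ^ (-(n : ℝ) - (d + 1 : ℕ)) * r ^ (d + 1) / d !
      = M₀ * r ^ (d + 1) * ‖x - x₀‖ ^ (-((n : ℝ) + d + 1)) := by
    have he : (-(n : ℝ) - ((d : ℕ) + 1 : ℕ)) = -((n : ℝ) + d + 1) := by push_cast; ring
    rw [he, Real.div_rpow (norm_nonneg _) (by norm_num : (0 : ℝ) ≤ 2)]
    rw [show (-((n : ℝ) + d + 1)) = -(((n : ℝ) + d + 1)) from rfl]
    rw [Real.rpow_neg (by norm_num : (0 : ℝ) ≤ 2)]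
    have h2 : (2 : ℝ) ^ ((n : ℝ) + d + 1) ≠ 0 := by positivity
    have hdfac : (d ! : ℝ) ≠ 0 := Nat.cast_ne_zero.2 d.factorial_ne_zero
    rw [hM₀def]
    field_simp
  have hpt : ∀ y ∈ closedBall x₀ r, ‖K (x - y) - T y‖ ≤
      M₀ * r ^ (d + 1) * ‖x - x₀‖ ^ (-((n : ℝ) + d + 1)) := by
    intro y hy
    have hkey := key_taylor_bound hK hC₀ (fun z hz => hKbound (d + 1) le_rfl z hz)
      hr (hvnorm y hy) hx (c := x - x₀) (v := y - x₀)
    rw [show x - x₀ - (y - x₀) = x - y from by abel, neg_sub] at hkey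
    rw [← harith]
    exact hkey
  -- continuity
  have hKcont : ContinuousOn (fun y => K (x - y)) (closedBall x₀ r) :=
    hK.continuousOn.comp ((continuous_const.sub continuous_id).continuousOn)
      (fun y hy => Set.mem_compl_singleton_iff.2 (hBne y hy))
  have hTcont : Continuous T := by
    rw [hTdef]
    refine continuous_finset_sum _ fun k _ => Continuous.fun_const_smul ?_ _
    exact (iteratedFDerivWithin ℝ k K {(0 : Euc n)}ᶜ (x - x₀)).coe_continuous.comp
      (continuous_pi fun _ => continuous_const.sub continuous_id)
  -- integrability
  have hf1 : IntegrableOn (fun y => (K (x - y) - T y) * (a y : ℂ)) (closedBall x₀ r) volume := by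
    refine (integrableOn_smul_cont haint hameas (phi := fun y => K (x - y) - T y)
      (hKcont.sub hTcont.continuousOn)).congr
      (Filter.Eventually.of_forall fun y => ?_)
    show a y • (K (x - y) - T y) = _
    rw [Complex.real_smul, mul_comm]
  have hf2 : IntegrableOn (fun y => T y * (a y : ℂ)) (closedBall x₀ r) volume := by
    refine (integrableOn_smul_cont haint hameas (phi := T)
      hTcont.continuousOn).congr (Filter.Eventually.of_forall fun y => ?_)
    show a y • T y = _
    rw [Complex.real_smul, mul_comm]
  -- moments kill T
  have hmom0 : ∫ y in closedBall x₀ r, T y * (a y : ℂ) = 0 := by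
    have h0 : ∀ y : Euc n, T y * (a y : ℂ) = ∑ k ∈ Finset.range (d + 1),
        (k ! : ℝ)⁻¹ • (a y • (iteratedFDerivWithin ℝ k K {(0 : Euc n)}ᶜ (x - x₀))
          (fun _ => x₀ - y)) := by
      intro y
      rw [show T y * (a y : ℂ) = a y • T y from by rw [Complex.real_smul, mul_comm], hTdef]
      rw [Finset.smul_sum]
      exact Finset.sum_congr rfl fun k _ => smul_comm _ _ _
    have hintk : ∀ k : ℕ, IntegrableOn (fun y => (k ! : ℝ)⁻¹ •
        (a y • (iteratedFDerivWithin ℝ k K {(0 : Euc n)}ᶜ (x - x₀)) (fun _ => x₀ - y)))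
        (closedBall x₀ r) volume := by
      intro k
      have hphi : ContinuousOn (fun y : Euc n => (k ! : ℝ)⁻¹ •
          (iteratedFDerivWithin ℝ k K {(0 : Euc n)}ᶜ (x - x₀)) (fun _ => x₀ - y))
          (closedBall x₀ r) := by
        refine Continuous.continuousOn (Continuous.fun_const_smul ?_ _)
        exact (iteratedFDerivWithin ℝ k K {(0 : Euc n)}ᶜ (x - x₀)).coe_continuous.comp
          (continuous_pi fun _ => continuous_const.sub continuous_id)
      exact (integrableOn_smul_cont haint hameas hphi).congr
        (Filter.Eventually.of_forall fun y => smul_comm _ _ _)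
    calc ∫ y in closedBall x₀ r, T y * (a y : ℂ)
        = ∫ y in closedBall x₀ r, ∑ k ∈ Finset.range (d + 1),
            (k ! : ℝ)⁻¹ • (a y • (iteratedFDerivWithin ℝ k K {(0 : Euc n)}ᶜ (x - x₀))
              (fun _ => x₀ - y)) :=
          integral_congr_ae (Filter.Eventually.of_forall fun y => h0 y)
      _ = ∑ k ∈ Finset.range (d + 1), ∫ y in closedBall x₀ r,
            (k ! : ℝ)⁻¹ • (a y • (iteratedFDerivWithin ℝ k K {(0 : Euc n)}ᶜ (x - x₀))
              (fun _ => x₀ - y)) :=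
          integral_finset_sum _ fun k _ => hintk k
      _ = ∑ k ∈ Finset.range (d + 1), (k ! : ℝ)⁻¹ • ∫ y in closedBall x₀ r,
            a y • (iteratedFDerivWithin ℝ k K {(0 : Euc n)}ᶜ (x - x₀)) (fun _ => x₀ - y) :=
          Finset.sum_congr rfl fun k _ => integral_smul _ _
      _ = 0 := Finset.sum_eq_zero fun k hk => by
          rw [integral_atom_multilinear_zero hd hameas hsupp haint hmom
            (Nat.lt_succ_iff.1 (Finset.mem_range.1 hk)) _, smul_zero]
  -- split
  have hsplit : ∫ y in closedBall x₀ r, K (x - y) * (a y : ℂ)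
      = ∫ y in closedBall x₀ r, (K (x - y) - T y) * (a y : ℂ) := by
    calc ∫ y in closedBall x₀ r, K (x - y) * (a y : ℂ)
        = ∫ y in closedBall x₀ r, ((K (x - y) - T y) * (a y : ℂ) + T y * (a y : ℂ)) :=
          integral_congr_ae (Filter.Eventually.of_forall fun y => by ring)
      _ = (∫ y in closedBall x₀ r, (K (x - y) - T y) * (a y : ℂ))
            + ∫ y in closedBall x₀ r, T y * (a y : ℂ) := integral_add hf1 hf2
      _ = _ := by rw [hmom0, add_zero]
  rw [hsplit]
  calc (‖∫ y in closedBall x₀ r, (K (x - y) - T y) * (a y : ℂ)‖₊ : ℝ≥0∞)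
      ≤ ∫⁻ y in closedBall x₀ r, ‖(K (x - y) - T y) * (a y : ℂ)‖₊ :=
        enorm_integral_le_lintegral_enorm _
    _ ≤ ∫⁻ y in closedBall x₀ r,
          ENNReal.ofReal (M₀ * r ^ (d + 1) * ‖x - x₀‖ ^ (-((n : ℝ) + d + 1))) * ‖a y‖₊ := by
        refine lintegral_mono_ae ((ae_restrict_iff' measurableSet_closedBall).2
          (Filter.Eventually.of_forall fun y hy => ?_))
        calc (‖(K (x - y) - T y) * (a y : ℂ)‖₊ : ℝ≥0∞)
            = (‖K (x - y) - T y‖₊ : ℝ≥0∞) * (‖a y‖₊ : ℝ≥0∞) := by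
              rw [nnnorm_mul, ENNReal.coe_mul, Complex.nnnorm_real]
          _ ≤ ENNReal.ofReal (M₀ * r ^ (d + 1) * ‖x - x₀‖ ^ (-((n : ℝ) + d + 1))) * ‖a y‖₊ := by
              refine mul_le_mul_left ?_ _
              rw [← ENNReal.ofReal_coe_nnreal, coe_nnnorm]
              exact ENNReal.ofReal_le_ofReal (hpt y hy)
    _ = ENNReal.ofReal (M₀ * r ^ (d + 1) * ‖x - x₀‖ ^ (-((n : ℝ) + d + 1))) *
          ∫⁻ y in closedBall x₀ r, ‖a y‖₊ :=
        lintegral_const_mul' _ _ ENNReal.ofReal_ne_top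
    _ ≤ ENNReal.ofReal (M₀ * r ^ (d + 1) * ‖x - x₀‖ ^ (-((n : ℝ) + d + 1))) *
          (volume (closedBall x₀ r) * N⁻¹) := mul_le_mul_right hholder _
    _ ≤ (ENNReal.ofReal M₀ + 1) * (κ ^ θ)⁻¹ *
          volume (closedBall x₀ r) ^ (1 + ((d : ℝ) + 1) / n) * N⁻¹ *
          ENNReal.ofReal (‖x - x₀‖ ^ (-((n : ℝ) + d + 1))) := by
        rw [show (1 + ((d : ℝ) + 1) / n) = (1 : ℝ) + θ from rfl, hvolpow]
        rw [ENNReal.ofReal_mul (by positivity), ENNReal.ofReal_mul hM₀]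
        have hcancel : (κ ^ θ)⁻¹ * κ ^ θ = 1 := ENNReal.inv_mul_cancel hκθ0 hκθT
        set q : ℝ≥0∞ := κ ^ θ with hqdef
        set w : ℝ≥0∞ := q⁻¹ with hwdef
        set m : ℝ≥0∞ := N⁻¹ with hmdef
        set V : ℝ≥0∞ := volume (closedBall x₀ r) with hVdef
        set R1 : ℝ≥0∞ := ENNReal.ofReal (r ^ (d + 1)) with hR1def
        set O : ℝ≥0∞ := ENNReal.ofReal (‖x - x₀‖ ^ (-((n : ℝ) + d + 1))) with hOdef
        calc ENNReal.ofReal M₀ * R1 * O * (V * m)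
            ≤ (ENNReal.ofReal M₀ + 1) * R1 * O * (V * m) := by
              gcongr
              exact le_self_add
          _ = (w * q) * ((ENNReal.ofReal M₀ + 1) * R1 * O * (V * m)) := by
              rw [hcancel, one_mul]
          _ = (ENNReal.ofReal M₀ + 1) * w * (V * (R1 * q)) * m * O := by ring

end Statement14Aux

/-- pointwise decay of a singular integral applied to a `(p(·),s)` atom. -/
theorem statement14 {n : ℕ} (hn : 1 ≤ n) (p₀ : ℝ) (hp₀pos : 0 < p₀) (hp₀ : p₀ ≤ 1)
    (d : ℕ) (hd : (d : ℤ) = ⌊(n : ℝ) * (1 / p₀ - 1)⌋)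
    (s : ℝ) (hs : 1 < s) (C₀ : ℝ) (K : Euc n → ℂ)
    (hK : ContDiffOn ℝ (d + 1 : ℕ) K {(0 : Euc n)}ᶜ)
    (hKbound : ∀ k : ℕ, k ≤ d + 1 → ∀ x : Euc n, x ≠ 0 →
      ‖iteratedFDerivWithin ℝ k K {(0 : Euc n)}ᶜ x‖ ≤ C₀ * ‖x‖ ^ (-(n : ℝ) - k)) :
    ∃ C : ℝ≥0∞, C < ∞ ∧
    ∀ (p : Euc n → ℝ), IsMP0 p p₀ →
    ∀ (a : Euc n → ℝ) (x₀ : Euc n) (r : ℝ), IsAtomQ p p₀ s a x₀ r →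
    ∀ x : Euc n, 2 * r ≤ ‖x - x₀‖ →
      (‖∫ y in closedBall x₀ r, K (x - y) * (a y : ℂ)‖₊ : ℝ≥0∞) ≤
        C * volume (closedBall x₀ r) ^ (1 + ((d : ℝ) + 1) / n) * (ballNorm p x₀ r)⁻¹ *
          ENNReal.ofReal (‖x - x₀‖ ^ (-((n : ℝ) + d + 1))) := by
  obtain ⟨C, hC, h⟩ := statement14_aux hn p₀ hp₀pos hp₀ d hd s hs C₀ K hK hKbound
  refine ⟨C, hC, ?_⟩
  intro p _hp a x₀ r hatom x hx
  exact h a x₀ r hatom.meas hatom.r_pos hatom.supp (ballNorm p x₀ r) hatom.size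
    hatom.moments x hx

end VarHardy
end
end

section
/- Let p(·): ℝⁿ → (0,∞) be measurable with 0 < p₋ := ess inf p ≤ p₊ := ess sup p < ∞ and p₋ ≤ 1. Then for all measurable functions f, g on ℝⁿ: ‖f + g‖_{p(·)}^{p₋} ≤ ‖f‖_{p(·)}^{p₋} + ‖g‖_{p(·)}^{p₋}. -/
open MeasureTheory Metric Filter Topology ENNReal SchwartzMap
open scoped NNReal

noncomputable section

namespace VarHardy

variable {n : ℕ}

/-- Pointwise convexity-type inequality in `ℝ≥0∞`:
`(s^{1/m} a + t^{1/m} b)^q ≤ s a^q + t b^q` when `s + t = 1` and `0 < m ≤ 1`, `m ≤ q`. -/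
lemma aux_pointwise {m q : ℝ} (hm : 0 < m) (hm1 : m ≤ 1) (hq : m ≤ q)
    (s t a b : ℝ≥0∞) (hst : s + t = 1) :
    (s ^ (1 / m) * a + t ^ (1 / m) * b) ^ q ≤ s * a ^ q + t * b ^ q := by
  have hmul : (1 / m) * m = 1 := by field_simp
  have h1 : (s ^ (1 / m) * a + t ^ (1 / m) * b) ^ m ≤ s * a ^ m + t * b ^ m := by
    refine (ENNReal.rpow_add_le_add_rpow _ _ hm.le hm1).trans_eq ?_
    rw [ENNReal.mul_rpow_of_nonneg _ _ hm.le, ENNReal.mul_rpow_of_nonneg _ _ hm.le,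
      ← ENNReal.rpow_mul s, ← ENNReal.rpow_mul t, hmul, ENNReal.rpow_one, ENNReal.rpow_one]
  have hqm : 1 ≤ q / m := (one_le_div hm).2 hq
  have hkey : (s ^ (1 / m) * a + t ^ (1 / m) * b) ^ q
      = ((s ^ (1 / m) * a + t ^ (1 / m) * b) ^ m) ^ (q / m) := by
    rw [← ENNReal.rpow_mul]
    congr 1
    field_simp
  rw [hkey]
  calc ((s ^ (1 / m) * a + t ^ (1 / m) * b) ^ m) ^ (q / m)
      ≤ (s * a ^ m + t * b ^ m) ^ (q / m) :=
        ENNReal.rpow_le_rpow h1 (by positivity)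
    _ ≤ s * (a ^ m) ^ (q / m) + t * (b ^ m) ^ (q / m) :=
        ENNReal.rpow_arith_mean_le_arith_mean2_rpow s t (a ^ m) (b ^ m) hst hqm
    _ = s * a ^ q + t * b ^ q := by
        rw [← ENNReal.rpow_mul a, ← ENNReal.rpow_mul b]
        congr 2 <;> field_simp

/-- Rescaling a division in `ℝ≥0∞`. -/
lemma aux_div (a u lam : ℝ≥0∞) (hu0 : u ≠ 0) (hut : u ≠ ∞) :
    a / lam = (u / lam) * (a / u) := by
  rw [div_eq_mul_inv, div_eq_mul_inv, div_eq_mul_inv]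
  calc a * lam⁻¹ = a * (u * u⁻¹) * lam⁻¹ := by
        rw [ENNReal.mul_inv_cancel hu0 hut, mul_one]
    _ = u * lam⁻¹ * (a * u⁻¹) := by ring

/-- The Luxemburg defining set is upward closed. -/
lemma aux_upward {p : Euc n → ℝ} (hppos : ∀ᵐ x ∂(volume : Measure (Euc n)), 0 < p x)
    (f : Euc n → ℝ≥0∞) {u v : ℝ≥0∞} (huv : u ≤ v)
    (hu : ∫⁻ x, (f x / u) ^ p x ∂volume ≤ 1) :
    ∫⁻ x, (f x / v) ^ p x ∂volume ≤ 1 := by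
  refine le_trans (lintegral_mono_ae ?_) hu
  filter_upwards [hppos] with x hx
  exact ENNReal.rpow_le_rpow (ENNReal.div_le_div_left huv _) hx.le

/-- The key modular estimate: if `u, v` are admissible for `f, g` then
`(u^m + v^m)^{1/m}` is admissible for `f + g`. -/
lemma aux_modular {p : Euc n → ℝ} (hpm : Measurable p) {m : ℝ} (hm : 0 < m) (hm1 : m ≤ 1)
    (hple : ∀ᵐ x ∂(volume : Measure (Euc n)), m ≤ p x)
    (f g : Euc n → ℝ) (hf : Measurable f) (hg : Measurable g)
    {u v : ℝ≥0∞} (hu0 : u ≠ 0) (hut : u ≠ ∞) (hv0 : v ≠ 0) (hvt : v ≠ ∞)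
    (hfu : ∫⁻ x, ((‖f x‖₊ : ℝ≥0∞) / u) ^ p x ∂volume ≤ 1)
    (hgv : ∫⁻ x, ((‖g x‖₊ : ℝ≥0∞) / v) ^ p x ∂volume ≤ 1) :
    ∫⁻ x, ((‖f x + g x‖₊ : ℝ≥0∞) / (u ^ m + v ^ m) ^ (1 / m)) ^ p x ∂volume ≤ 1 := by
  set lam : ℝ≥0∞ := (u ^ m + v ^ m) ^ (1 / m) with hlam
  have hum0 : u ^ m ≠ 0 := (ENNReal.rpow_pos (pos_iff_ne_zero.2 hu0) hut).ne'
  have humt : u ^ m ≠ ∞ := (ENNReal.rpow_lt_top_of_nonneg hm.le hut).ne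
  have hvm0 : v ^ m ≠ 0 := (ENNReal.rpow_pos (pos_iff_ne_zero.2 hv0) hvt).ne'
  have hvmt : v ^ m ≠ ∞ := (ENNReal.rpow_lt_top_of_nonneg hm.le hvt).ne
  have hsum0 : u ^ m + v ^ m ≠ 0 := by simp [hum0]
  have hsumt : u ^ m + v ^ m ≠ ∞ := by simp [humt, hvmt, ENNReal.add_ne_top]
  have hlam0 : lam ≠ 0 := by
    rw [hlam]
    exact (ENNReal.rpow_pos (pos_iff_ne_zero.2 hsum0) hsumt).ne'
  have hlamt : lam ≠ ∞ := by
    rw [hlam]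
    exact (ENNReal.rpow_lt_top_of_nonneg (by positivity) hsumt).ne
  have hlamm : lam ^ m = u ^ m + v ^ m := by
    rw [hlam, ← ENNReal.rpow_mul, one_div_mul_cancel hm.ne', ENNReal.rpow_one]
  set s : ℝ≥0∞ := u ^ m / lam ^ m with hs
  set t : ℝ≥0∞ := v ^ m / lam ^ m with ht
  have hst : s + t = 1 := by
    rw [hs, ht, ENNReal.div_add_div_same, ← hlamm, ENNReal.div_self (by
      rw [hlamm]; exact hsum0) (by rw [hlamm]; exact hsumt)]
  have hus : u / lam = s ^ (1 / m) := by
    rw [hs, ← ENNReal.div_rpow_of_nonneg _ _ hm.le, ← ENNReal.rpow_mul,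
      mul_one_div_cancel hm.ne', ENNReal.rpow_one]
  have hvt' : v / lam = t ^ (1 / m) := by
    rw [ht, ← ENNReal.div_rpow_of_nonneg _ _ hm.le, ← ENNReal.rpow_mul,
      mul_one_div_cancel hm.ne', ENNReal.rpow_one]
  -- measurability
  have hma : Measurable fun x => ((‖f x‖₊ : ℝ≥0∞) / u) ^ p x :=
    (hf.nnnorm.coe_nnreal_ennreal.div measurable_const).pow hpm
  have hmb : Measurable fun x => ((‖g x‖₊ : ℝ≥0∞) / v) ^ p x :=
    (hg.nnnorm.coe_nnreal_ennreal.div measurable_const).pow hpm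
  have hptw : ∀ᵐ x ∂(volume : Measure (Euc n)),
      ((‖f x + g x‖₊ : ℝ≥0∞) / lam) ^ p x
        ≤ s * ((‖f x‖₊ : ℝ≥0∞) / u) ^ p x + t * ((‖g x‖₊ : ℝ≥0∞) / v) ^ p x := by
    filter_upwards [hple] with x hx
    have hbase : (‖f x + g x‖₊ : ℝ≥0∞) / lam
        ≤ s ^ (1 / m) * ((‖f x‖₊ : ℝ≥0∞) / u) + t ^ (1 / m) * ((‖g x‖₊ : ℝ≥0∞) / v) := by
      have h1 : (‖f x + g x‖₊ : ℝ≥0∞) ≤ (‖f x‖₊ : ℝ≥0∞) + (‖g x‖₊ : ℝ≥0∞) := by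
        exact_mod_cast nnnorm_add_le (f x) (g x)
      calc (‖f x + g x‖₊ : ℝ≥0∞) / lam
          ≤ ((‖f x‖₊ : ℝ≥0∞) + (‖g x‖₊ : ℝ≥0∞)) / lam :=
            ENNReal.div_le_div_right h1 _
        _ = (‖f x‖₊ : ℝ≥0∞) / lam + (‖g x‖₊ : ℝ≥0∞) / lam := ENNReal.div_add_div_same.symm
        _ = s ^ (1 / m) * ((‖f x‖₊ : ℝ≥0∞) / u) + t ^ (1 / m) * ((‖g x‖₊ : ℝ≥0∞) / v) := by
            rw [aux_div ((‖f x‖₊ : ℝ≥0∞)) u lam hu0 hut,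
              aux_div ((‖g x‖₊ : ℝ≥0∞)) v lam hv0 hvt, hus, hvt']
    calc ((‖f x + g x‖₊ : ℝ≥0∞) / lam) ^ p x
        ≤ (s ^ (1 / m) * ((‖f x‖₊ : ℝ≥0∞) / u)
            + t ^ (1 / m) * ((‖g x‖₊ : ℝ≥0∞) / v)) ^ p x :=
          ENNReal.rpow_le_rpow hbase (hm.le.trans hx)
      _ ≤ s * ((‖f x‖₊ : ℝ≥0∞) / u) ^ p x + t * ((‖g x‖₊ : ℝ≥0∞) / v) ^ p x :=
          aux_pointwise hm hm1 hx s t _ _ hst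
  calc ∫⁻ x, ((‖f x + g x‖₊ : ℝ≥0∞) / lam) ^ p x ∂volume
      ≤ ∫⁻ x, (s * ((‖f x‖₊ : ℝ≥0∞) / u) ^ p x
          + t * ((‖g x‖₊ : ℝ≥0∞) / v) ^ p x) ∂volume := lintegral_mono_ae hptw
    _ = s * ∫⁻ x, ((‖f x‖₊ : ℝ≥0∞) / u) ^ p x ∂volume
          + t * ∫⁻ x, ((‖g x‖₊ : ℝ≥0∞) / v) ^ p x ∂volume := by
        rw [lintegral_add_left (hma.const_mul s), lintegral_const_mul s hma,
          lintegral_const_mul t hmb]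
    _ ≤ s * 1 + t * 1 := by gcongr
    _ = 1 := by rw [mul_one, mul_one, hst]

/-- the `p₋`-triangle inequality for the Luxemburg quasi-norm when
`p₋ ≤ 1`. -/
theorem statement18 {n : ℕ} (hn : 1 ≤ n) (p : Euc n → ℝ) (hpm : Measurable p)
    (hppos : ∀ᵐ x ∂(volume : Measure (Euc n)), 0 < p x)
    (hbdd : ∃ M : ℝ, ∀ᵐ x ∂(volume : Measure (Euc n)), p x ≤ M)
    (hpos : 0 < essInf p (volume : Measure (Euc n)))
    (hle1 : essInf p (volume : Measure (Euc n)) ≤ 1)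
    (f g : Euc n → ℝ) (hf : Measurable f) (hg : Measurable g) :
    luxNorm' p (fun x => f x + g x) ^ essInf p (volume : Measure (Euc n)) ≤
      luxNorm' p f ^ essInf p (volume : Measure (Euc n)) +
        luxNorm' p g ^ essInf p (volume : Measure (Euc n)) := by
  set m := essInf p (volume : Measure (Euc n)) with hm_def
  have hbd : Filter.IsBoundedUnder (· ≥ ·) (ae (volume : Measure (Euc n))) p :=
    ⟨0, by rw [Filter.eventually_map]; filter_upwards [hppos] with x hx; exact hx.le⟩
  have hple : ∀ᵐ x ∂(volume : Measure (Euc n)), m ≤ p x := ae_essInf_le hbd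
  set A := luxNorm' p f with hA_def
  set B := luxNorm' p g with hB_def
  set C := luxNorm' p (fun x => f x + g x) with hC_def
  rcases eq_or_ne A ∞ with hA | hA
  · rw [hA, ENNReal.top_rpow_of_pos hpos]; simp
  rcases eq_or_ne B ∞ with hB | hB
  · rw [hB, ENNReal.top_rpow_of_pos hpos]; simp
  -- key step: for admissible finite `u > A`, `v > B`, `C^m ≤ u^m + v^m`
  have key : ∀ u v : ℝ≥0∞, A < u → u < ∞ → B < v → v < ∞ → C ^ m ≤ u ^ m + v ^ m := by
    intro u v hAu hu hBv hv
    have hu0 : u ≠ 0 := (zero_le.trans_lt hAu).ne'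
    have hv0 : v ≠ 0 := (zero_le.trans_lt hBv).ne'
    obtain ⟨u', hu'S, hu'lt⟩ := sInf_lt_iff.mp hAu
    obtain ⟨v', hv'S, hv'lt⟩ := sInf_lt_iff.mp hBv
    have hfu : ∫⁻ x, ((‖f x‖₊ : ℝ≥0∞) / u) ^ p x ∂volume ≤ 1 :=
      aux_upward hppos _ hu'lt.le hu'S
    have hgv : ∫⁻ x, ((‖g x‖₊ : ℝ≥0∞) / v) ^ p x ∂volume ≤ 1 :=
      aux_upward hppos _ hv'lt.le hv'S
    have hmem : ∫⁻ x, ((‖f x + g x‖₊ : ℝ≥0∞) / (u ^ m + v ^ m) ^ (1 / m)) ^ p x ∂volume ≤ 1 :=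
      aux_modular hpm hpos hle1 hple f g hf hg hu0 hu.ne hv0 hv.ne hfu hgv
    have hC_le : C ≤ (u ^ m + v ^ m) ^ (1 / m) := sInf_le hmem
    calc C ^ m ≤ ((u ^ m + v ^ m) ^ (1 / m)) ^ m := ENNReal.rpow_le_rpow hC_le hpos.le
      _ = u ^ m + v ^ m := by
          rw [← ENNReal.rpow_mul, one_div_mul_cancel hpos.ne', ENNReal.rpow_one]
  -- pass to the limit in `u` and `v`
  have step1 : ∀ v : ℝ≥0∞, B < v → v < ∞ → C ^ m ≤ A ^ m + v ^ m := by
    intro v hBv hv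
    have hne : (𝓝[>] A).NeBot := nhdsGT_neBot_of_exists_gt ⟨∞, lt_top_iff_ne_top.2 hA⟩
    refine ge_of_tendsto (x := 𝓝[>] A) (f := fun u : ℝ≥0∞ => u ^ m + v ^ m) ?_ ?_
    · exact (((ENNReal.continuous_rpow_const).tendsto A).add tendsto_const_nhds).mono_left
        nhdsWithin_le_nhds
    · filter_upwards [self_mem_nhdsWithin,
        Filter.Eventually.filter_mono nhdsWithin_le_nhds
          (Filter.Tendsto.eventually_lt_const (lt_top_iff_ne_top.2 hA) tendsto_id)] with u hu1 hu2
      exact key u v hu1 hu2 hBv hv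
  have hne : (𝓝[>] B).NeBot := nhdsGT_neBot_of_exists_gt ⟨∞, lt_top_iff_ne_top.2 hB⟩
  refine ge_of_tendsto (x := 𝓝[>] B) (f := fun v : ℝ≥0∞ => A ^ m + v ^ m) ?_ ?_
  · exact (tendsto_const_nhds.add ((ENNReal.continuous_rpow_const).tendsto B)).mono_left
      nhdsWithin_le_nhds
  · filter_upwards [self_mem_nhdsWithin,
      Filter.Eventually.filter_mono nhdsWithin_le_nhds
        (Filter.Tendsto.eventually_lt_const (lt_top_iff_ne_top.2 hB) tendsto_id)] with v hv1 hv2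
    exact step1 v hv1 hv2

end VarHardy
end
end
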